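/- If C = k(k+1)/2 + r with k ≥ 1 and 0 ≤ r ≤ k, then (k + r/(k+1))² < 2C; in integer form, ((k+1)k + r)² < 2C(k+1)². -/

import Mathlib

theorem stmt_1 (C k r : ℕ) (hk : 1 ≤ k) (hr : r ≤ k)
    (hC : C = k * (k + 1) / 2 + r) :
    ((k : ℚ) + (r : ℚ) / (k + 1)) ^ 2 < 2 * C ∧
      ((k + 1) * k + r) ^ 2 < 2 * C * (k + 1) ^ 2 := by
  have h2 : 2 * C = k * (k + 1) + 2 * r := by
    subst hC
    have : 2 * (k * (k + 1) / 2) = k * (k + 1) := Nat.two_mul_div_two_of_even (Nat.even_mul_succ_self k)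
    omega
  have hnat : ((k + 1) * k + r) ^ 2 < 2 * C * (k + 1) ^ 2 := by
    rw [h2]
    nlinarith [Nat.zero_le r, hr, hk, sq_nonneg (k - r)]
  refine ⟨?_, hnat⟩
  have hkpos : (0 : ℚ) < (k : ℚ) + 1 := by positivity
  have hq : ((k : ℚ) + (r : ℚ) / (k + 1)) = (((k + 1) * k + r : ℕ) : ℚ) / ((k : ℚ) + 1) := by
    push_cast
    field_simp
  rw [hq, div_pow, div_lt_iff₀ (by positivity)]
  have := hnat
  have : ((((k + 1) * k + r) ^ 2 : ℕ) : ℚ) < ((2 * C * (k + 1) ^ 2 : ℕ) : ℚ) := by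
    exact_mod_cast hnat
  push_cast at this ⊢
  linarith
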